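/- Let A = {a_1,...,a_{3m}} with B/4 < a_i < B/2 for all i and Σ a_i = mB, and let T be the tree formed by 3m paths P_i of length a_i and m paths Q_1,...,Q_m of length L = 2mB, all starting from a common vertex u. If T has a covering strategy with m robots all starting at u of time at most L + 2B, then A admits a 3-partition into m triples each summing to B. -/

import Mathlib

open Finset

variable {V : Type*}

/-- The list of consecutive steps of a walk given as a list of vertices. -/
def wsteps (W : List V) : List (V × V) := W.zip W.tail

/-- A walk on a graph: a nonempty list of vertices in which consecutive
entries are equal or adjacent. -/
def IsWalk (G : SimpleGraph V) (W : List V) : Prop :=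
  W ≠ [] ∧ ∀ p ∈ wsteps W, p.1 = p.2 ∨ G.Adj p.1 p.2

/-- The length of a walk: the number of position-changing moves. -/
def wlen [DecidableEq V] (W : List V) : ℕ :=
  (wsteps W).countP (fun p => decide (p.1 ≠ p.2))

/-- The number of times a walk traverses the edge `{x, y}` (in either direction). -/
def trav [DecidableEq V] (W : List V) (x y : V) : ℕ :=
  (wsteps W).countP (fun p => decide ((p.1 = x ∧ p.2 = y) ∨ (p.1 = y ∧ p.2 = x)))

/-- The number of times a walk traverses the edge `(x, y)` from `x` to `y`. -/
def dirTrav [DecidableEq V] (W : List V) (x y : V) : ℕ :=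
  (wsteps W).countP (fun p => decide (p.1 = x ∧ p.2 = y))

/-- A tuple of walks covers the graph: every vertex appears in some walk. -/
def Covers {k : ℕ} (S : Fin k → List V) : Prop := ∀ v : V, ∃ i, v ∈ S i

/-- The total length of a strategy: the sum of the lengths of the walks. -/
def slen [DecidableEq V] {k : ℕ} (S : Fin k → List V) : ℕ := ∑ i, wlen (S i)

/-- A minimum-length covering strategy: a tuple of walks covering all vertices whose
total length is no larger than that of any covering strategy with the same starts. -/
def IsMinCover [DecidableEq V] (G : SimpleGraph V) {k : ℕ} (S : Fin k → List V) : Prop :=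
  (∀ i, IsWalk G (S i)) ∧ Covers S ∧
    ∀ S' : Fin k → List V, (∀ i, IsWalk G (S' i)) → Covers S' →
      (∀ i, (S' i).head? = (S i).head?) → slen S ≤ slen S'

/-- A 3-partition of the multiset a into m triples each summing to B. -/
def ThreePartition (m B : ℕ) (a : Fin (3 * m) → ℕ) : Prop :=
  ∃ f : Fin (3 * m) → Fin m,
    (∀ j : Fin m, (Finset.univ.filter (fun i => f i = j)).card = 3) ∧
    (∀ j : Fin m, ∑ i ∈ Finset.univ.filter (fun i => f i = j), a i = B)

namespace MTCPAux

lemma wsteps_cons_cons {α : Type*} (x y : α) (l : List α) :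
    wsteps (x :: y :: l) = (x, y) :: wsteps (y :: l) := rfl

lemma wsteps_append {α : Type*} : ∀ (l₁ : List α) (y : α) (l₂ : List α),
    wsteps (l₁ ++ y :: l₂) = wsteps (l₁ ++ [y]) ++ wsteps (y :: l₂)
  | [], y, l₂ => rfl
  | [a], y, l₂ => rfl
  | a :: b :: l₁, y, l₂ => by
    have h := wsteps_append (b :: l₁) y l₂
    simp only [List.cons_append] at *
    rw [wsteps_cons_cons, wsteps_cons_cons, h]
    rfl

lemma bound_aux {α : Type*} (φ : α → ℕ) : ∀ (l : List α) (x z : α),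
    (∀ p ∈ wsteps l, φ p.1 ≤ φ p.2 + 1 ∧ φ p.2 ≤ φ p.1 + 1) →
    l.head? = some x → l.getLast? = some z →
    φ x ≤ (wsteps l).countP (fun p => decide (φ p.1 ≠ φ p.2)) + φ z ∧
    φ z ≤ (wsteps l).countP (fun p => decide (φ p.1 ≠ φ p.2)) + φ x
  | [], x, z => by simp
  | [a], x, z => by
    intro _ hx hz
    simp only [List.head?_cons, Option.some.injEq] at hx
    simp only [List.getLast?_singleton, Option.some.injEq] at hz
    subst hx; subst hz; simp [wsteps]
  | a :: b :: t, x, z => by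
    intro hΔ hx hz
    simp only [List.head?_cons, Option.some.injEq] at hx
    subst hx
    rw [List.getLast?_cons_cons] at hz
    have ih := bound_aux φ (b :: t) b z
      (fun p hp => hΔ p (by rw [wsteps_cons_cons]; exact List.mem_cons_of_mem _ hp)) rfl hz
    have hab := hΔ (a, b) (by rw [wsteps_cons_cons]; exact List.mem_cons_self)
    simp only at hab
    obtain ⟨ih1, ih2⟩ := ih
    obtain ⟨h1, h2⟩ := hab
    rw [wsteps_cons_cons, List.countP_cons]
    by_cases h : φ a = φ b
    · rw [if_neg (by simp [h])]
      constructor <;> omega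
    · rw [if_pos (by simp [h])]
      constructor <;> omega


lemma reach_bound {α : Type*} (φ : α → ℕ) (l : List α) (u v z : α)
    (hΔ : ∀ p ∈ wsteps l, φ p.1 ≤ φ p.2 + 1 ∧ φ p.2 ≤ φ p.1 + 1)
    (hh : l.head? = some u) (hu : φ u = 0) (hv : v ∈ l) (hz : l.getLast? = some z) :
    2 * φ v ≤ (wsteps l).countP (fun p => decide (φ p.1 ≠ φ p.2)) + φ z := by
  obtain ⟨s, t, rfl⟩ := List.append_of_mem hv
  have hws := wsteps_append s v t
  rw [hws, List.countP_append]
  have hm1 : ∀ p ∈ wsteps (s ++ [v]), p ∈ wsteps (s ++ v :: t) := by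
    intro p hp; rw [hws]; exact List.mem_append_left _ hp
  have hm2 : ∀ p ∈ wsteps (v :: t), p ∈ wsteps (s ++ v :: t) := by
    intro p hp; rw [hws]; exact List.mem_append_right _ hp
  have hh1 : (s ++ [v]).head? = some u := by
    cases s with
    | nil => simp only [List.nil_append, List.head?_cons]
             simpa using hh
    | cons a s' => simpa using hh
  have hb1 := bound_aux φ (s ++ [v]) u v (fun p hp => hΔ p (hm1 p hp)) hh1
    (by rw [List.getLast?_concat])
  have hz2 : (v :: t).getLast? = some z := by
    rwa [List.getLast?_append_cons] at hz
  have hb2 := bound_aux φ (v :: t) v z (fun p hp => hΔ p (hm2 p hp)) rfl hz2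
  obtain ⟨-, hb1⟩ := hb1
  obtain ⟨hb2, -⟩ := hb2
  omega

lemma sum_countP_le {ι α : Type*} [Fintype ι] [DecidableEq ι] (l : List α)
    (q : ι → α → Bool) (r : α → Bool)
    (h : ∀ x ∈ l, ∀ c, q c x → r x)
    (h1 : ∀ x ∈ l, ∀ c c', q c x → q c' x → c = c') :
    ∑ c, l.countP (q c) ≤ l.countP r := by
  induction l with
  | nil => simp
  | cons a l ih =>
    simp only [List.countP_cons]
    rw [Finset.sum_add_distrib]
    have key : ∑ c, (if q c a then 1 else 0) ≤ (if r a then 1 else 0) := by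
      have hcard : ∑ c, (if q c a then 1 else 0)
          = (Finset.univ.filter (fun c => q c a)).card := by
        rw [Finset.card_filter]
      rw [hcard]
      rcases Finset.eq_empty_or_nonempty (Finset.univ.filter (fun c => q c a)) with he | hne
      · simp [he]
      · obtain ⟨c, hc⟩ := hne
        rw [Finset.mem_filter] at hc
        rw [if_pos (h a (List.mem_cons_self) c hc.2)]
        apply Finset.card_le_one.2
        intro c1 hc1 c2 hc2
        rw [Finset.mem_filter] at hc1 hc2
        exact h1 a (List.mem_cons_self) c1 c2 hc1.2 hc2.2
    have ih' := ih (fun x hx => h x (List.mem_cons_of_mem a hx))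
      (fun x hx => h1 x (List.mem_cons_of_mem a hx))
    omega


lemma exists_walk {V : Type*} (G : SimpleGraph V) (l : List V) : ∀ (x y : V),
    (x :: l).Chain' G.Adj → (x :: l).getLast? = some y →
    ∃ w : G.Walk x y, w.support = x :: l := by
  induction l with
  | nil =>
    intro x y _ hy
    simp only [List.getLast?_singleton, Option.some.injEq] at hy
    subst hy
    exact ⟨SimpleGraph.Walk.nil, rfl⟩
  | cons b l ih =>
    intro x y hc hy
    rw [List.getLast?_cons_cons] at hy
    unfold List.Chain' at hc; rw [List.isChain_cons_cons] at hc
    obtain ⟨w, hw⟩ := ih b y hc.2 hy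
    exact ⟨SimpleGraph.Walk.cons hc.1 w, by rw [SimpleGraph.Walk.support_cons, hw]⟩

lemma path_list_unique {V : Type*} {G : SimpleGraph V} (hG : G.IsAcyclic) (l₁ l₂ : List V)
    (h₁c : l₁.Chain' G.Adj) (h₁n : l₁.Nodup) (h₂c : l₂.Chain' G.Adj) (h₂n : l₂.Nodup)
    (hne : l₁ ≠ []) (hne2 : l₂ ≠ [])
    (hh : l₁.head? = l₂.head?) (hl : l₁.getLast? = l₂.getLast?) :
    l₁ = l₂ := by
  match l₁, l₂, hne, hne2 with
  | x₁ :: t₁, x₂ :: t₂, _, _ =>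
    simp only [List.head?_cons, Option.some.injEq] at hh
    subst hh
    have hy : (x₁ :: t₁).getLast? = some ((x₁ :: t₁).getLast (List.cons_ne_nil _ _)) :=
      List.getLast?_eq_getLast _
    set y := (x₁ :: t₁).getLast (List.cons_ne_nil _ _) with hydef
    obtain ⟨w₁, hw₁⟩ := exists_walk G t₁ x₁ y h₁c hy
    obtain ⟨w₂, hw₂⟩ := exists_walk G t₂ x₁ y h₂c (by rw [← hl]; exact hy)
    have hp₁ : w₁.IsPath := (SimpleGraph.Walk.isPath_def w₁).2 (hw₁ ▸ h₁n)
    have hp₂ : w₂.IsPath := (SimpleGraph.Walk.isPath_def w₂).2 (hw₂ ▸ h₂n)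
    have := SimpleGraph.isAcyclic_iff_path_unique.mp hG ⟨w₁, hp₁⟩ ⟨w₂, hp₂⟩
    rw [← hw₁, ← hw₂]
    exact congrArg SimpleGraph.Walk.support (congrArg Subtype.val this)


lemma consec_aux {V : Type*} [DecidableEq V] {G : SimpleGraph V} (hG : G.IsAcyclic)
    (l : List V) (hc : l.Chain' G.Adj) (hn : l.Nodup) (x y : V)
    (hxy : G.Adj x y) (hx : x ∈ l) (hy : y ∈ l) (hlt : l.idxOf x < l.idxOf y) :
    l.idxOf y = l.idxOf x + 1 := by
  have hkl : l.idxOf x < l.length := List.idxOf_lt_length_iff.2 hx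
  have hkl' : l.idxOf y < l.length := List.idxOf_lt_length_iff.2 hy
  have hgx : l[l.idxOf x] = x := List.getElem_idxOf hkl
  have hgy : l[l.idxOf y] = y := List.getElem_idxOf hkl'
  have hd1 : l.drop (l.idxOf x) = x :: l.drop (l.idxOf x + 1) := by
    rw [List.drop_eq_getElem_cons hkl, hgx]
  have hd2 : l.drop (l.idxOf y) = y :: l.drop (l.idxOf y + 1) := by
    rw [List.drop_eq_getElem_cons hkl', hgy]
  have hxnot : x ∉ l.drop (l.idxOf y) := by
    intro hmem
    obtain ⟨i, hi⟩ := List.mem_iff_getElem?.1 hmem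
    rw [List.getElem?_drop] at hi
    obtain ⟨hilt, hig⟩ := List.getElem?_eq_some_iff.1 hi
    have := List.Nodup.idxOf_getElem hn (l.idxOf y + i) hilt
    rw [hig] at this
    omega
  have hglast : (l.drop (l.idxOf x)).getLast? = l.getLast? := by
    conv_rhs => rw [← List.take_append_drop (l.idxOf x) l]
    rw [List.getLast?_append_of_ne_nil _ (by rw [hd1]; exact List.cons_ne_nil _ _)]
  have hglast' : (l.drop (l.idxOf y)).getLast? = l.getLast? := by
    conv_rhs => rw [← List.take_append_drop (l.idxOf y) l]
    rw [List.getLast?_append_of_ne_nil _ (by rw [hd2]; exact List.cons_ne_nil _ _)]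
  have heq : l.drop (l.idxOf x) = x :: l.drop (l.idxOf y) := by
    apply path_list_unique hG
    · exact hc.suffix (List.drop_suffix _ l)
    · exact hn.sublist (List.drop_suffix _ l).sublist
    · unfold List.Chain'; rw [List.isChain_cons]
      constructor
      · intro w hw
        rw [hd2] at hw
        simp only [List.head?_cons, Option.mem_def, Option.some.injEq] at hw
        exact hw ▸ hxy
      · exact hc.suffix (List.drop_suffix _ l)
    · exact List.nodup_cons.2 ⟨hxnot, hn.sublist (List.drop_suffix _ l).sublist⟩
    · rw [hd1]; exact List.cons_ne_nil _ _
    · exact List.cons_ne_nil _ _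
    · rw [hd1]; rfl
    · rw [hglast, show x :: l.drop (l.idxOf y) = [x] ++ l.drop (l.idxOf y) from rfl,
        List.getLast?_append_of_ne_nil _ (by rw [hd2]; exact List.cons_ne_nil _ _), hglast']
  have hlen := congrArg List.length heq
  simp only [List.length_drop, List.length_cons] at hlen
  omega

lemma arm_edge {V ι : Type*} [DecidableEq V] {G : SimpleGraph V} (hG : G.IsAcyclic) (u : V)
    (A : ι → List V) (hnd : ∀ c, (A c).Nodup) (hch : ∀ c, (A c).Chain' G.Adj)
    (hhd : ∀ c, (A c).head? = some u)
    (hint : ∀ c c', c ≠ c' → ∀ v, v ∈ A c → v ∈ A c' → v = u)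
    (hcov : ∀ x : V, ∃ c, x ∈ A c) (x y : V) (hxy : G.Adj x y) :
    ∃ c, ((A c).idxOf y = (A c).idxOf x + 1 ∨ (A c).idxOf x = (A c).idxOf y + 1)
      ∧ x ∈ A c ∧ y ∈ A c := by
  have hne : x ≠ y := hxy.ne
  have h0 : ∀ c, (A c)[0]? = some u := by
    intro c; rw [← List.head?_eq_getElem?]; exact hhd c
  have humem : ∀ c, u ∈ A c := by
    intro c; exact List.mem_iff_getElem?.2 ⟨0, h0 c⟩
  have hu0 : ∀ c, (A c).idxOf u = 0 := by
    intro c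
    obtain ⟨hlt0, hg0⟩ := List.getElem?_eq_some_iff.1 (h0 c)
    have := List.Nodup.idxOf_getElem (hnd c) 0 hlt0
    rwa [hg0] at this
  have hipos : ∀ c, ∀ v ∈ A c, v ≠ u → 1 ≤ (A c).idxOf v := by
    intro c v hv hvu
    rcases Nat.eq_zero_or_pos ((A c).idxOf v) with h | h
    · exfalso
      have h2 := List.getElem?_idxOf hv
      rw [h, h0 c] at h2
      exact hvu (Option.some_injective _ h2.symm)
    · exact h
  -- core claim: two adjacent non-u vertices lie in the same arm
  have core : ∀ cx cy, x ∈ A cx → y ∈ A cy → x ≠ u → y ≠ u → cx = cy := by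
    intro cx cy hx hy hxu hyu
    by_contra hccy
    set kx := (A cx).idxOf x with hkxd
    set ky := (A cy).idxOf y with hkyd
    have hkxl : kx < (A cx).length := List.idxOf_lt_length_iff.2 hx
    have hkyl : ky < (A cy).length := List.idxOf_lt_length_iff.2 hy
    have hkx1 : 1 ≤ kx := hipos cx x hx hxu
    have hky1 : 1 ≤ ky := hipos cy y hy hyu
    have hlen1 : ((A cy).take (ky+1)).length = ky + 1 := by
      rw [List.length_take]; omega
    have hlen2 : ((A cx).take (kx+1)).length = kx + 1 := by
      rw [List.length_take]; omega
    have htklast : ∀ (c : ι) (v : V) (h : v ∈ A c),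
        ((A c).take ((A c).idxOf v + 1)).getLast? = some v := by
      intro c v hv
      have hl : ((A c).take ((A c).idxOf v + 1)).length = (A c).idxOf v + 1 := by
        rw [List.length_take]
        have := List.idxOf_lt_length_iff.2 hv
        omega
      rw [List.getLast?_eq_getElem?, hl, Nat.add_sub_cancel,
        List.getElem?_take_of_lt (Nat.lt_succ_self _)]
      exact List.getElem?_idxOf hv
    have htkhead : ∀ (c : ι) (n : ℕ), ((A c).take (n+1)).head? = some u := by
      intro c n
      rw [List.head?_eq_getElem?, List.getElem?_take_of_lt (Nat.succ_pos n)]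
      exact h0 c
    have heq : (A cy).take (ky+1) = (A cx).take (kx+1) ++ [y] := by
      apply path_list_unique hG
      · exact (hch cy).prefix (List.take_prefix _ _)
      · exact (hnd cy).sublist (List.take_prefix _ _).sublist
      · unfold List.Chain'; rw [List.isChain_append]
        refine ⟨(hch cx).prefix (List.take_prefix _ _), List.isChain_singleton _, ?_⟩
        intro p hp q hq
        simp only [List.head?_cons, Option.mem_def, Option.some.injEq] at hq
        rw [htklast cx x hx] at hp
        simp only [Option.mem_def, Option.some.injEq] at hp
        exact hp ▸ hq ▸ hxy
      · rw [List.nodup_append]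
        refine ⟨(hnd cx).sublist (List.take_prefix _ _).sublist, List.nodup_singleton _, ?_⟩
        intro v hv w hw hvw
        have hv2 : v ∈ [y] := by simp only [List.mem_singleton] at hw ⊢; rw [hvw, hw]
        simp only [List.mem_singleton] at hv2
        subst hv2
        have : v ∈ A cx := (List.take_prefix _ _).subset hv
        exact hyu (hint cx cy hccy v this hy)
      · exact List.ne_nil_of_length_pos (by omega)
      · exact List.append_ne_nil_of_right_ne_nil _ (List.cons_ne_nil _ _)
      · rw [htkhead cy ky, List.head?_append, htkhead cx kx]; rfl
      · rw [htklast cy y hy, List.getLast?_concat]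
    -- compare entries at index 1
    have h1y : ((A cy).take (ky+1))[1]? = (A cy)[1]? := List.getElem?_take_of_lt (by omega)
    have h1x : ((A cx).take (kx+1) ++ [y])[1]? = (A cx)[1]? := by
      rw [List.getElem?_append, if_pos (by omega : (1:ℕ) < (List.take (kx+1) (A cx)).length),
        List.getElem?_take_of_lt (by omega)]
    have h1 : (A cx)[1]? = (A cy)[1]? := by rw [← h1x, ← h1y, heq]
    have hlx : 1 < (A cx).length := by omega
    have hw : (A cx)[1]? = some ((A cx)[1]'hlx) := List.getElem?_eq_getElem hlx
    have hwx : (A cx)[1]'hlx ∈ A cx := List.mem_iff_getElem?.2 ⟨1, hw⟩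
    have hwy : (A cx)[1]'hlx ∈ A cy := List.mem_iff_getElem?.2 ⟨1, by rw [← h1]; exact hw⟩
    have hwu : (A cx)[1]'hlx = u := hint cx cy hccy _ hwx hwy
    have := List.Nodup.idxOf_getElem (hnd cx) 1 hlx
    rw [hwu, hu0 cx] at this
    exact absurd this (by omega)
  -- find a common arm
  have hcommon : ∃ c, x ∈ A c ∧ y ∈ A c := by
    by_cases hxu : x = u
    · obtain ⟨cy, hcy⟩ := hcov y
      exact ⟨cy, hxu ▸ humem cy, hcy⟩
    · by_cases hyu : y = u
      · obtain ⟨cx, hcx⟩ := hcov x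
        exact ⟨cx, hcx, hyu ▸ humem cx⟩
      · obtain ⟨cx, hcx⟩ := hcov x
        obtain ⟨cy, hcy⟩ := hcov y
        have := core cx cy hcx hcy hxu hyu
        exact ⟨cx, hcx, this ▸ hcy⟩
  obtain ⟨c, hxc, hyc⟩ := hcommon
  refine ⟨c, ?_, hxc, hyc⟩
  have hne' : (A c).idxOf x ≠ (A c).idxOf y := by
    intro h
    exact hne ((List.idxOf_inj hxc).1 h)
  rcases Nat.lt_or_ge ((A c).idxOf x) ((A c).idxOf y) with h | h
  · exact Or.inl (consec_aux hG (A c) (hch c) (hnd c) x y hxy hxc hyc h)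
  · exact Or.inr (consec_aux hG (A c) (hch c) (hnd c) y x hxy.symm hyc hxc (by omega))

def phi {V ι : Type*} [DecidableEq V] (A : ι → List V) (c : ι) (v : V) : ℕ :=
  if v ∈ A c then (A c).idxOf v else 0

lemma indexOf_of_head {V : Type*} [DecidableEq V] {l : List V} {u : V}
    (h : l.head? = some u) : l.idxOf u = 0 := by
  cases l with
  | nil => simp at h
  | cons a t =>
    simp only [List.head?_cons, Option.some.injEq] at h
    subst h
    exact List.idxOf_cons_self

section Master

variable {V ι : Type*} [DecidableEq V] [Fintype ι] [DecidableEq ι] [Nonempty ι]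
  {G : SimpleGraph V} (u : V) (A : ι → List V)

lemma phi_u (hhd : ∀ c, (A c).head? = some u) (c : ι) : phi A c u = 0 := by
  unfold phi
  split
  · exact indexOf_of_head (hhd c)
  · rfl

lemma phi_mem {c : ι} {v : V} (hv : v ∈ A c) : phi A c v = (A c).idxOf v := if_pos hv

lemma phi_zero_of_ne (hhd : ∀ c, (A c).head? = some u)
    (hint : ∀ c c', c ≠ c' → ∀ v, v ∈ A c → v ∈ A c' → v = u)
    {c₀ c : ι} {v : V} (hv : v ∈ A c₀) (hc : c ≠ c₀) : phi A c v = 0 := by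
  unfold phi
  split
  · next hmem => rw [hint c c₀ hc v hmem hv]; exact indexOf_of_head (hhd c)
  · rfl

lemma master (hG : G.IsAcyclic)
    (hnd : ∀ c, (A c).Nodup) (hch : ∀ c, (A c).Chain' G.Adj)
    (hhd : ∀ c, (A c).head? = some u)
    (hint : ∀ c c', c ≠ c' → ∀ v, v ∈ A c → v ∈ A c' → v = u)
    (hcov : ∀ x : V, ∃ c, x ∈ A c)
    (W : List V) (hW : IsWalk G W) (hWhead : W.head? = some u) :
    ∃ z, W.getLast? = some z ∧ ∀ D : Finset ι,
      (∀ c ∈ D, ∃ e, (A c).getLast? = some e ∧ e ∈ W) →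
      ∑ c ∈ D, 2 * ((A c).length - 1) ≤ wlen W + ∑ c ∈ D, phi A c z := by
  obtain ⟨hWne, hWadj⟩ := hW
  refine ⟨W.getLast hWne, List.getLast?_eq_getLast _, ?_⟩
  intro D hD
  set z := W.getLast hWne with hzdef
  have hstep : ∀ p ∈ wsteps W, ∃ c₀ : ι,
      (∀ c, c ≠ c₀ → phi A c p.1 = phi A c p.2) ∧
      phi A c₀ p.1 ≤ phi A c₀ p.2 + 1 ∧ phi A c₀ p.2 ≤ phi A c₀ p.1 + 1 := by
    intro p hp
    rcases hWadj p hp with heq | hadj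
    · exact ⟨Classical.arbitrary ι, fun c _ => by rw [heq], by rw [heq]; omega, by rw [heq]; omega⟩
    · obtain ⟨c₀, hcons, hx, hy⟩ := arm_edge hG u A hnd hch hhd hint hcov _ _ hadj
      refine ⟨c₀, ?_, ?_, ?_⟩
      · intro c hc
        rw [phi_zero_of_ne u A hhd hint hx hc, phi_zero_of_ne u A hhd hint hy hc]
      · rw [phi_mem A hx, phi_mem A hy]; omega
      · rw [phi_mem A hx, phi_mem A hy]; omega
  have hΔ : ∀ c : ι, ∀ p ∈ wsteps W, phi A c p.1 ≤ phi A c p.2 + 1 ∧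
      phi A c p.2 ≤ phi A c p.1 + 1 := by
    intro c p hp
    obtain ⟨c₀, hother, h1, h2⟩ := hstep p hp
    by_cases hc : c = c₀
    · subst hc; exact ⟨h1, h2⟩
    · rw [hother c hc]; omega
  -- per-arm bound
  have hper : ∀ c ∈ D, 2 * ((A c).length - 1) ≤
      (wsteps W).countP (fun p => decide (phi A c p.1 ≠ phi A c p.2)) + phi A c z := by
    intro c hc
    obtain ⟨e, he, heW⟩ := hD c hc
    have hemem : e ∈ A c := List.mem_of_getLast? he
    have hAne : A c ≠ [] := by intro h; rw [h] at he; simp at he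
    have hidx : (A c).idxOf e = (A c).length - 1 := by
      rw [List.getLast?_eq_getElem?] at he
      obtain ⟨hlt, hg⟩ := List.getElem?_eq_some_iff.1 he
      have := List.Nodup.idxOf_getElem (hnd c) ((A c).length - 1) hlt
      rwa [hg] at this
    have hphie : phi A c e = (A c).length - 1 := by rw [phi_mem A hemem, hidx]
    have := reach_bound (phi A c) W u e z (hΔ c) hWhead (phi_u u A hhd c) heW
      (List.getLast?_eq_getLast _)
    rwa [hphie] at this
  calc ∑ c ∈ D, 2 * ((A c).length - 1)
      ≤ ∑ c ∈ D, ((wsteps W).countP (fun p => decide (phi A c p.1 ≠ phi A c p.2))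
          + phi A c z) := Finset.sum_le_sum hper
    _ = ∑ c ∈ D, (wsteps W).countP (fun p => decide (phi A c p.1 ≠ phi A c p.2))
          + ∑ c ∈ D, phi A c z := Finset.sum_add_distrib
    _ ≤ wlen W + ∑ c ∈ D, phi A c z := by
        apply Nat.add_le_add_right
        calc ∑ c ∈ D, (wsteps W).countP (fun p => decide (phi A c p.1 ≠ phi A c p.2))
            ≤ ∑ c : ι, (wsteps W).countP (fun p => decide (phi A c p.1 ≠ phi A c p.2)) :=
              Finset.sum_le_sum_of_subset (Finset.subset_univ D)
          _ ≤ (wsteps W).countP (fun p => decide (p.1 ≠ p.2)) := by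
              apply sum_countP_le
              · intro p hp c hq
                simp only [decide_eq_true_eq] at hq ⊢
                intro hpe
                exact hq (by rw [hpe])
              · intro p hp c c' hq hq'
                simp only [decide_eq_true_eq] at hq hq'
                obtain ⟨c₀, hother, -, -⟩ := hstep p hp
                by_cases hc : c = c₀
                · by_cases hc' : c' = c₀
                  · rw [hc, hc']
                  · exact absurd (hother c' hc') hq'
                · exact absurd (hother c hc) hq
          _ = wlen W := rfl
end Master

end MTCPAux

open MTCPAux

/-- MTCP reduction, converse direction: if the star of the 3m paths Pᵢ and the m
paths Qⱼ (each of length L = 2mB) has a covering strategy with m robots starting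
at u of time at most L + 2B, then A admits a 3-partition. -/
theorem stmt13 {V : Type*} [Fintype V] [DecidableEq V] (G : SimpleGraph V) (hT : G.IsTree)
    (m B : ℕ) (hm : 1 ≤ m) (a : Fin (3 * m) → ℕ)
    (ha : ∀ i, B < 4 * a i ∧ 2 * a i < B) (hsum : ∑ i, a i = m * B)
    (u : V) (P : Fin (3 * m) → List V) (Q : Fin m → List V)
    (hPpath : ∀ i, (P i).Nodup ∧ (P i).Chain' G.Adj ∧ (P i).head? = some u ∧
      (P i).length = a i + 1)
    (hQpath : ∀ j, (Q j).Nodup ∧ (Q j).Chain' G.Adj ∧ (Q j).head? = some u ∧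
      (Q j).length = 2 * m * B + 1)
    (hPP : ∀ i j, i ≠ j → ∀ x, x ∈ P i → x ∈ P j → x = u)
    (hPQ : ∀ i j, ∀ x, x ∈ P i → x ∈ Q j → x = u)
    (hQQ : ∀ i j, i ≠ j → ∀ x, x ∈ Q i → x ∈ Q j → x = u)
    (hcov : ∀ x : V, (∃ i, x ∈ P i) ∨ (∃ j, x ∈ Q j))
    (S : Fin m → List V) (hwalk : ∀ i, IsWalk G (S i)) (hcovS : Covers S)
    (hstart : ∀ i, (S i).head? = some u)
    (htime : ∀ i, (S i).length - 1 ≤ 2 * m * B + 2 * B) :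
    ThreePartition m B a := by
  classical
  -- basic numerology
  have hB1 : 1 ≤ B := by
    have h := ha ⟨0, by omega⟩
    omega
  have ha1 : ∀ i, 1 ≤ a i := fun i => by have h := ha i; omega
  have hL2B : 2 * B ≤ 2 * m * B := Nat.mul_le_mul_right B (by omega)
  -- the arms
  set A : (Fin (3*m) ⊕ Fin m) → List V := Sum.elim P Q with hA
  have : Nonempty (Fin (3*m) ⊕ Fin m) := ⟨Sum.inr ⟨0, by omega⟩⟩
  have hnd : ∀ c, (A c).Nodup := by rintro (i | j)
                                    exacts [(hPpath i).1, (hQpath j).1]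
  have hch : ∀ c, (A c).Chain' G.Adj := by rintro (i | j)
                                           exacts [(hPpath i).2.1, (hQpath j).2.1]
  have hhd : ∀ c, (A c).head? = some u := by rintro (i | j)
                                             exacts [(hPpath i).2.2.1, (hQpath j).2.2.1]
  have hint : ∀ c c', c ≠ c' → ∀ v, v ∈ A c → v ∈ A c' → v = u := by
    rintro (i | j) (i' | j') hne v hv hv'
    · exact hPP i i' (fun h => hne (by rw [h])) v hv hv'
    · exact hPQ i j' v hv hv'
    · exact hPQ i' j v hv' hv
    · exact hQQ j j' (fun h => hne (by rw [h])) v hv hv'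
  have hcovA : ∀ x : V, ∃ c, x ∈ A c := by
    intro x
    rcases hcov x with ⟨i, hi⟩ | ⟨j, hj⟩
    · exact ⟨Sum.inl i, hi⟩
    · exact ⟨Sum.inr j, hj⟩
  have hlenP : ∀ i, (A (Sum.inl i)).length - 1 = a i := fun i => by
    simp [hA, (hPpath i).2.2.2]
  have hlenQ : ∀ j, (A (Sum.inr j)).length - 1 = 2 * m * B := fun j => by
    simp [hA, (hQpath j).2.2.2]
  have hphibd : ∀ c v, phi A c v ≤ (A c).length - 1 := by
    intro c v
    unfold phi
    split
    · next h => have := List.idxOf_lt_length_iff.2 h; omega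
    · omega
  -- master inequality per robot, with wlen bounded by the time budget
  have hM : ∀ r, ∃ z, (S r).getLast? = some z ∧ ∀ D : Finset (Fin (3*m) ⊕ Fin m),
      (∀ c ∈ D, ∃ e, (A c).getLast? = some e ∧ e ∈ S r) →
      ∑ c ∈ D, 2 * ((A c).length - 1) ≤ (2 * m * B + 2 * B) + ∑ c ∈ D, phi A c z := by
    intro r
    obtain ⟨z, hz, hb⟩ := master u A hT.IsAcyclic hnd hch hhd hint hcovA (S r)
      (hwalk r) (hstart r)
    refine ⟨z, hz, fun D hD => le_trans (hb D hD) (Nat.add_le_add_right ?_ _)⟩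
    calc wlen (S r) ≤ (wsteps (S r)).length := List.countP_le_length
      _ ≤ (S r).length - 1 := by
          rw [wsteps, List.length_zip, List.length_tail]; omega
      _ ≤ 2 * m * B + 2 * B := htime r
  choose z hzlast hDbound using hM
  -- exclusivity of phi at the final vertex
  have hzex : ∀ r, ∃ c₀, ∀ c, c ≠ c₀ → phi A c (z r) = 0 := by
    intro r
    obtain ⟨c₀, hc₀⟩ := hcovA (z r)
    exact ⟨c₀, fun c hc => phi_zero_of_ne u A hhd hint hc₀ hc⟩
  -- assignment of Q-arm ends to robots
  have hQne : ∀ j, (Q j) ≠ [] := by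
    intro j h
    have := (hQpath j).2.2.2
    rw [h] at this
    simp at this
  have hPne : ∀ i, (P i) ≠ [] := by
    intro i h
    have := (hPpath i).2.2.2
    rw [h] at this
    simp at this
  have hσex : ∀ j : Fin m, ∃ r, ∃ e, (A (Sum.inr j)).getLast? = some e ∧ e ∈ S r := by
    intro j
    obtain ⟨r, hr⟩ := hcovS ((Q j).getLast (hQne j))
    exact ⟨r, (Q j).getLast (hQne j), List.getLast?_eq_getLast _, hr⟩
  choose σ hσ using hσex
  have hinj : Function.Injective σ := by
    intro j j' hjj
    by_contra hne
    have hDok : ∀ c ∈ ({Sum.inr j, Sum.inr j'} : Finset (Fin (3*m) ⊕ Fin m)),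
        ∃ e, (A c).getLast? = some e ∧ e ∈ S (σ j) := by
      intro c hc
      rcases Finset.mem_insert.1 hc with rfl | hc
      · exact hσ j
      · rw [Finset.mem_singleton] at hc
        subst hc
        rw [hjj]
        exact hσ j'
    have key := hDbound (σ j) _ hDok
    have hpairne : (Sum.inr j : Fin (3*m) ⊕ Fin m) ≠ Sum.inr j' := by
      simp [hne]
    rw [Finset.sum_pair hpairne, Finset.sum_pair hpairne, hlenQ, hlenQ] at key
    -- bound the phi sum
    obtain ⟨c₀, hc₀⟩ := hzex (σ j)
    have hφ : phi A (Sum.inr j) (z (σ j)) + phi A (Sum.inr j') (z (σ j)) ≤ 2 * m * B := by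
      by_cases h1 : (Sum.inr j : Fin (3*m) ⊕ Fin m) = c₀
      · have e2 : phi A (Sum.inr j') (z (σ j)) = 0 :=
          hc₀ _ (by rw [← h1]; exact hpairne.symm)
        have e1 := hphibd (Sum.inr j) (z (σ j))
        rw [hlenQ] at e1
        omega
      · have e1 : phi A (Sum.inr j) (z (σ j)) = 0 := hc₀ _ h1
        have e2 := hphibd (Sum.inr j') (z (σ j))
        rw [hlenQ] at e2
        omega
    omega
  have hsurj : Function.Surjective σ := Finite.surjective_of_injective hinj
  choose τ hτ using hsurj
  -- assignment of P-arm ends to robots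
  have hgex : ∀ i, ∃ r, ∃ e, (A (Sum.inl i)).getLast? = some e ∧ e ∈ S r := by
    intro i
    obtain ⟨r, hr⟩ := hcovS ((P i).getLast (hPne i))
    exact ⟨r, (P i).getLast (hPne i), List.getLast?_eq_getLast _, hr⟩
  choose g hg using hgex
  -- per-robot load bound
  have hsB : ∀ r, ∑ i ∈ Finset.univ.filter (fun i => g i = r), a i ≤ B := by
    intro r
    set J := Finset.univ.filter (fun i => g i = r) with hJ
    set D := insert (Sum.inr (τ r) : Fin (3*m) ⊕ Fin m) (J.image (Sum.inl : Fin (3*m) → Fin (3*m) ⊕ Fin m)) with hD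
    have hnotmem : (Sum.inr (τ r) : Fin (3*m) ⊕ Fin m) ∉ J.image (Sum.inl : Fin (3*m) → Fin (3*m) ⊕ Fin m) := by simp
    have hDok : ∀ c ∈ D, ∃ e, (A c).getLast? = some e ∧ e ∈ S r := by
      intro c hc
      rcases Finset.mem_insert.1 hc with rfl | hc
      · have := hσ (τ r)
        rwa [hτ r] at this
      · obtain ⟨i, hi, rfl⟩ := Finset.mem_image.1 hc
        have hgi : g i = r := (Finset.mem_filter.1 hi).2
        have := hg i
        rwa [hgi] at this
    have key := hDbound r D hDok
    rw [hD, Finset.sum_insert hnotmem, Finset.sum_insert hnotmem,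
      Finset.sum_image (fun _ _ _ _ h => Sum.inl_injective h),
      Finset.sum_image (fun _ _ _ _ h => Sum.inl_injective h), hlenQ] at key
    simp only [hlenP] at key
    rw [← Finset.mul_sum] at key
    -- bound the phi sum
    obtain ⟨c₀, hc₀⟩ := hzex r
    have hQφ : phi A (Sum.inr (τ r)) (z r) ≤ 2 * m * B := by
      have := hphibd (Sum.inr (τ r)) (z r)
      rwa [hlenQ] at this
    by_cases hcase : ∃ i₀ ∈ J, (Sum.inl i₀ : Fin (3*m) ⊕ Fin m) = c₀
    · obtain ⟨i₀, hi₀J, hi₀⟩ := hcase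
      exfalso
      have hQ0 : phi A (Sum.inr (τ r)) (z r) = 0 :=
        hc₀ _ (by rw [← hi₀]; simp)
      have hPφ : ∑ i ∈ J, phi A (Sum.inl i) (z r) ≤ a i₀ := by
        calc ∑ i ∈ J, phi A (Sum.inl i) (z r)
            ≤ ∑ i ∈ J, (if i = i₀ then a i₀ else 0) := by
              apply Finset.sum_le_sum
              intro i hi
              by_cases h : i = i₀
              · subst h
                rw [if_pos rfl]
                have := hphibd (Sum.inl i) (z r)
                rwa [hlenP] at this
              · rw [if_neg h, hc₀ _ (by rw [← hi₀]; simp [h])]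
          _ = a i₀ := by rw [Finset.sum_ite_eq' J i₀ (fun _ => a i₀), if_pos hi₀J]
      have hlow : a i₀ ≤ ∑ i ∈ J, a i := Finset.single_le_sum (fun i _ => Nat.zero_le _) hi₀J
      have h1 := ha1 i₀
      omega
    · have hPφ : ∑ i ∈ J, phi A (Sum.inl i) (z r) = 0 := by
        apply Finset.sum_eq_zero
        intro i hi
        apply hc₀
        intro h
        exact hcase ⟨i, hi, h⟩
      omega
  -- fibers sum to exactly B
  have hfib : ∑ r : Fin m, ∑ i ∈ Finset.univ.filter (fun i => g i = r), a i = m * B := by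
    rw [Finset.sum_fiberwise]
    exact hsum
  have hconst : ∑ _r : Fin m, B = m * B := by
    simp [Finset.sum_const, Finset.card_univ, mul_comm]
  have hsEq : ∀ r, ∑ i ∈ Finset.univ.filter (fun i => g i = r), a i = B := by
    have := (Finset.sum_eq_sum_iff_of_le
      (fun r (_ : r ∈ Finset.univ) => hsB r)).1 (by rw [hfib, ← hconst])
    intro r
    exact this r (Finset.mem_univ r)
  -- cards are 3
  refine ⟨g, ?_, hsEq⟩
  intro r
  set J := Finset.univ.filter (fun i => g i = r) with hJ
  have hJne : J.Nonempty := by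
    rcases Finset.eq_empty_or_nonempty J with h | h
    · exfalso
      have := hsEq r
      rw [← hJ, h] at this
      simp at this
      omega
    · exact h
  have h4 : J.card * B < 4 * B := by
    calc J.card * B = ∑ _i ∈ J, B := by rw [Finset.sum_const, smul_eq_mul]
      _ < ∑ i ∈ J, 4 * a i := Finset.sum_lt_sum_of_nonempty hJne (fun i _ => (ha i).1)
      _ = 4 * B := by rw [← Finset.mul_sum, hsEq r]
  have h2 : 2 * B < J.card * B := by
    calc 2 * B = ∑ i ∈ J, 2 * a i := by rw [← Finset.mul_sum, hsEq r]
      _ < ∑ _i ∈ J, B := Finset.sum_lt_sum_of_nonempty hJne (fun i _ => (ha i).2)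
      _ = J.card * B := by rw [Finset.sum_const, smul_eq_mul]
  have hlt4 : J.card < 4 := by
    by_contra h
    push_neg at h
    have := Nat.mul_le_mul_right B h
    omega
  have hgt2 : 2 < J.card := by
    by_contra h
    push_neg at h
    have := Nat.mul_le_mul_right B h
    omega
  omega
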